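/- Define a relation on forests of leaf-labeled rooted binary trees on a fixed finite set I by: F' ≤ F iff there is an injection φ from the inner vertices of F' to the inner vertices of F such that for every inner vertex v of F' the set of ancestor leaves of v in F' is contained in the set of ancestor leaves of φ(v) in F, and φ preserves the ancestor relation among inner vertices (if v is on the path from w to the root in F', then φ(v) is on the path from φ(w) to the root in F). Then ≤ is a partial order on the set of forests on I. -/
import Mathlib


open Finset

/-- A forest of leaf-labeled rooted binary trees on a ground set of labels,
encoded by the family of "clades": for each inner vertex, the set of its
ancestor leaves. Laminarity plus the binary splitting condition exactly
characterize such forests, and inner vertices correspond bijectively to clades. -/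
structure Forest (I : Type*) [DecidableEq I] where
  ground : Finset I
  clades : Finset (Finset I)
  subset_ground : ∀ C ∈ clades, C ⊆ ground
  laminar : ∀ C ∈ clades, ∀ D ∈ clades, C ⊆ D ∨ D ⊆ C ∨ Disjoint C D
  binary : ∀ C ∈ clades, ∃ A B : Finset I,
      (A ∈ clades ∨ ∃ x, A = {x}) ∧ (B ∈ clades ∨ ∃ x, B = {x}) ∧
      Disjoint A B ∧ A ∪ B = C ∧ A ≠ C ∧ B ≠ C

namespace Forest

variable {I : Type*} [DecidableEq I]

/-- The partial order on forests of the paper: `F' ≤ F` iff there is an injection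
of the inner vertices of `F'` into those of `F` which enlarges ancestor-leaf sets
and preserves the ancestor relation among inner vertices. -/
def Le (F' F : Forest I) : Prop :=
  F'.ground = F.ground ∧ ∃ φ : Finset I → Finset I,
    Set.InjOn φ (F'.clades : Set (Finset I)) ∧
    (∀ C ∈ F'.clades, φ C ∈ F.clades) ∧
    (∀ C ∈ F'.clades, C ⊆ φ C) ∧
    (∀ C ∈ F'.clades, ∀ D ∈ F'.clades, C ⊆ D → φ C ⊆ φ D)

/-- `γ(F,V)`: the set of forests `F' ≤ F` whose inner vertices are identified,
via the order-defining injection, with the subset `V` of inner vertices of `F`. -/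
def gamma (F : Forest I) (V : Finset (Finset I)) : Set (Forest I) :=
  {F' | F'.ground = F.ground ∧ ∃ φ : Finset I → Finset I,
    Set.InjOn φ (F'.clades : Set (Finset I)) ∧
    (∀ C ∈ F'.clades, φ C ∈ F.clades) ∧
    (∀ C ∈ F'.clades, C ⊆ φ C) ∧
    (∀ C ∈ F'.clades, ∀ D ∈ F'.clades, C ⊆ D → φ C ⊆ φ D) ∧
    F'.clades.image φ = V}

/-- A forest consisting of a single tree. -/
def IsTree (F : Forest I) : Prop :=
  F.ground.Nonempty ∧ (F.ground ∈ F.clades ∨ F.ground.card = 1)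

/-- The support: leaves whose path to the root contains at least one inner vertex. -/
def supp (F : Forest I) : Finset I := F.clades.sup id

/-- The leaf-label sets of the trees of the forest: maximal clades together with
the singletons of labels not lying in any clade. -/
def rootBlocks (F : Forest I) : Finset (Finset I) :=
  F.clades.filter (fun C => ∀ D ∈ F.clades, C ⊆ D → C = D) ∪
  (F.ground.filter (fun x => ∀ C ∈ F.clades, x ∉ C)).image
    (fun x => ({x} : Finset I))

end Forest


lemma forest_aux {I : Type*} [DecidableEq I] (s : Finset (Finset I)) (σ : Finset I → Finset I)
    (hinj : Set.InjOn σ s) (hmem : ∀ C ∈ s, σ C ∈ s) (hsub : ∀ C ∈ s, C ⊆ σ C) :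
    ∀ C ∈ s, σ C = C := by
  have himg : s.image σ = s := by
    apply Finset.eq_of_subset_of_card_le
    · intro D hD
      obtain ⟨C, hC, rfl⟩ := Finset.mem_image.mp hD
      exact hmem C hC
    · rw [Finset.card_image_of_injOn hinj]
  have hsum : ∑ C ∈ s, (σ C).card = ∑ C ∈ s, C.card := by
    have := Finset.sum_image (f := Finset.card) (g := σ) (s := s)
      (fun a ha b hb h => hinj (Finset.mem_coe.mpr ha) (Finset.mem_coe.mpr hb) h)
    rw [himg] at this
    exact this.symm
  have key := (Finset.sum_eq_sum_iff_of_le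
    (fun C hC => Finset.card_le_card (hsub C hC))).mp hsum.symm
  intro C hC
  exact (Finset.eq_of_subset_of_card_le (hsub C hC) (le_of_eq (key C hC).symm)).symm

/-- the relation `F' ≤ F` on forests of leaf-labeled rooted binary
trees (existence of an injection of inner vertices enlarging ancestor-leaf sets
and preserving the ancestor relation) is a partial order: reflexive, transitive
and antisymmetric. -/
theorem stmt_6 (I : Type*) [DecidableEq I] :
    Reflexive (Forest.Le (I := I)) ∧ Transitive (Forest.Le (I := I)) ∧
      AntiSymmetric (Forest.Le (I := I)) := by
  refine ⟨?_, ?_, ?_⟩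
  · intro F
    exact ⟨rfl, id, Set.injOn_id _, fun C h => h, fun C _ => subset_rfl,
      fun C _ D _ h => h⟩
  · rintro F1 F2 F3 ⟨hg, φ, hinj, hmem, hsub, hmono⟩ ⟨hg', ψ, hinj', hmem', hsub', hmono'⟩
    refine ⟨hg.trans hg', ψ ∘ φ, ?_, fun C hC => hmem' _ (hmem C hC),
      fun C hC => (hsub C hC).trans (hsub' _ (hmem C hC)),
      fun C hC D hD h => hmono' _ (hmem C hC) _ (hmem D hD) (hmono C hC D hD h)⟩
    intro a ha b hb hab
    exact hinj ha hb (hinj' (Finset.mem_coe.mpr (hmem a ha)) (Finset.mem_coe.mpr (hmem b hb)) hab)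
  · rintro F G ⟨hg, φ, hφinj, hφmem, hφsub, -⟩ ⟨-, ψ, hψinj, hψmem, hψsub, -⟩
    have h1 : ∀ C ∈ F.clades, ψ (φ C) = C := by
      apply forest_aux _ (ψ ∘ φ)
      · intro a ha b hb hab
        exact hφinj ha hb (hψinj (Finset.mem_coe.mpr (hφmem a ha)) (Finset.mem_coe.mpr (hφmem b hb)) hab)
      · exact fun C hC => hψmem _ (hφmem C hC)
      · exact fun C hC => (hφsub C hC).trans (hψsub _ (hφmem C hC))
    have h2 : ∀ D ∈ G.clades, φ (ψ D) = D := by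
      apply forest_aux _ (φ ∘ ψ)
      · intro a ha b hb hab
        exact hψinj ha hb (hφinj (Finset.mem_coe.mpr (hψmem a ha)) (Finset.mem_coe.mpr (hψmem b hb)) hab)
      · exact fun C hC => hφmem _ (hψmem C hC)
      · exact fun C hC => (hψsub C hC).trans (hφsub _ (hψmem C hC))
    have hcl : F.clades = G.clades := by
      apply Finset.Subset.antisymm
      · intro C hC
        have : φ C = C := Finset.Subset.antisymm
          ((hψsub _ (hφmem C hC)).trans (le_of_eq (h1 C hC))) (hφsub C hC)
        exact this ▸ hφmem C hC
      · intro D hD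
        have : ψ D = D := Finset.Subset.antisymm
          ((hφsub _ (hψmem D hD)).trans (le_of_eq (h2 D hD))) (hψsub D hD)
        exact this ▸ hψmem D hD
    cases F; cases G; simp_all
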